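/- (Intersection measure formula and disjoint additivity.) Let {A_n} and {B_n} be μ-Cauchy sequences in Ω, and let S, T ⊆ X satisfy lim_{n→∞} μ*(A_n △ S) = 0 and lim_{n→∞} μ*(B_n △ T) = 0. Then lim_{n→∞} μ(A_n ∩ B_n) exists and equals μ*(S ∩ T); consequently, if μ*(S ∩ T) = 0 then lim_{n→∞} μ(A_n ∪ B_n) = lim_{n→∞} μ(A_n) + lim_{n→∞} μ(B_n). -/

import Mathlib

open Filter Set Topology
open scoped symmDiff ENNReal

/-- `Ω` is an algebra of sets on `X`: it contains `∅` and is closed under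
complements and finite unions. -/
def IsSetAlgebraOn {X : Type*} (Ω : Set (Set X)) : Prop :=
  ∅ ∈ Ω ∧ (∀ A ∈ Ω, Aᶜ ∈ Ω) ∧ (∀ A ∈ Ω, ∀ B ∈ Ω, A ∪ B ∈ Ω)

/-- `μ` is a countably additive measure on the algebra `Ω`. -/
def IsCountablyAdditiveOn {X : Type*} (Ω : Set (Set X)) (μ : Set X → ℝ≥0∞) : Prop :=
  μ ∅ = 0 ∧ ∀ A : ℕ → Set X, (∀ i, A i ∈ Ω) → Pairwise (Function.onFun Disjoint A) →
    (⋃ i, A i) ∈ Ω → μ (⋃ i, A i) = ∑' i, μ (A i)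

/-- The outer measure induced by `μ`:
`μ*(A) = inf { ∑ μ(Cᵢ) : A ⊆ ⋃ᵢ Cᵢ, Cᵢ ∈ Ω }`. -/
noncomputable def muStar {X : Type*} (Ω : Set (Set X)) (μ : Set X → ℝ≥0∞)
    (A : Set X) : ℝ≥0∞ :=
  ⨅ (C : ℕ → Set X) (_ : ∀ i, C i ∈ Ω) (_ : A ⊆ ⋃ i, C i), ∑' i, μ (C i)

/-- A `μ`-Cauchy sequence in `Ω`: a sequence of members of `Ω` with
`μ(B n ∆ B m) → 0` as `n, m → ∞`. -/
def MuCauchy {X : Type*} (Ω : Set (Set X)) (μ : Set X → ℝ≥0∞) (B : ℕ → Set X) : Prop :=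
  (∀ n, B n ∈ Ω) ∧ Tendsto (fun p : ℕ × ℕ => μ (B p.1 ∆ B p.2)) atTop (𝓝 0)

/-- `S̃`: the collection of subsets of `X` that are limits (in the pseudometric
`d(A,B) = μ*(A ∆ B)`) of `μ`-Cauchy sequences from `Ω`. -/
def Stilde {X : Type*} (Ω : Set (Set X)) (μ : Set X → ℝ≥0∞) : Set (Set X) :=
  {S | ∃ B : ℕ → Set X, MuCauchy Ω μ B ∧
    Tendsto (fun n => muStar Ω μ (B n ∆ S)) atTop (𝓝 0)}

section Aux

variable {X : Type*} {Ω : Set (Set X)} {μ : Set X → ℝ≥0∞}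

lemma alg_univ (hΩ : IsSetAlgebraOn Ω) : (Set.univ : Set X) ∈ Ω := by
  simpa using hΩ.2.1 ∅ hΩ.1

lemma alg_inter (hΩ : IsSetAlgebraOn Ω) {A B : Set X} (hA : A ∈ Ω) (hB : B ∈ Ω) :
    A ∩ B ∈ Ω := by
  have h := hΩ.2.1 _ (hΩ.2.2 _ (hΩ.2.1 _ hA) _ (hΩ.2.1 _ hB))
  simpa [Set.compl_union] using h

lemma alg_diff (hΩ : IsSetAlgebraOn Ω) {A B : Set X} (hA : A ∈ Ω) (hB : B ∈ Ω) :
    A \ B ∈ Ω := by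
  have := alg_inter hΩ hA (hΩ.2.1 _ hB)
  simpa [Set.diff_eq] using this

lemma alg_partialSups (hΩ : IsSetAlgebraOn Ω) {C : ℕ → Set X} (hC : ∀ i, C i ∈ Ω) (n : ℕ) :
    partialSups C n ∈ Ω := by
  induction n with
  | zero => simpa using hC 0
  | succ n ih => rw [partialSups_add_one]; exact hΩ.2.2 _ ih _ (hC (n + 1))

lemma alg_disjointed (hΩ : IsSetAlgebraOn Ω) {C : ℕ → Set X} (hC : ∀ i, C i ∈ Ω) (n : ℕ) :
    disjointed C n ∈ Ω := by
  cases n with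
  | zero => simpa [disjointed_zero] using hC 0
  | succ n => rw [disjointed_add_one]; exact alg_diff hΩ (hC (n + 1)) (alg_partialSups hΩ hC n)

lemma mu_add_pair (hΩ : IsSetAlgebraOn Ω) (hμ : IsCountablyAdditiveOn Ω μ)
    {A B : Set X} (hA : A ∈ Ω) (hB : B ∈ Ω) (hd : Disjoint A B) :
    μ (A ∪ B) = μ A + μ B := by
  set f : ℕ → Set X := fun n => if n = 0 then A else if n = 1 then B else ∅ with hf
  have hmem : ∀ i, f i ∈ Ω := by
    intro i; rcases i with _ | _ | i <;> simp [f, hA, hB, hΩ.1]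
  have hpw : Pairwise (Function.onFun Disjoint f) := by
    intro i j hij
    rcases i with _ | _ | i <;> rcases j with _ | _ | j <;>
      simp_all [f, Function.onFun, hd, hd.symm]
  have hU : ⋃ i, f i = A ∪ B := by
    apply subset_antisymm
    · exact iUnion_subset fun i => by rcases i with _ | _ | i <;> simp [f]
    · rintro x (h | h)
      · exact mem_iUnion.2 ⟨0, by simp [f, h]⟩
      · exact mem_iUnion.2 ⟨1, by simp [f, h]⟩
  have h2 := hμ.2 f hmem hpw (by rw [hU]; exact hΩ.2.2 _ hA _ hB)
  rw [hU] at h2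
  rw [h2, tsum_eq_sum (s := ({0, 1} : Finset ℕ)) ?_]
  · simp [f]
  · intro n hn
    rcases n with _ | _ | n <;> simp_all [f, hμ.1]

lemma mu_mono (hΩ : IsSetAlgebraOn Ω) (hμ : IsCountablyAdditiveOn Ω μ)
    {A B : Set X} (hA : A ∈ Ω) (hB : B ∈ Ω) (h : A ⊆ B) : μ A ≤ μ B := by
  have hu : A ∪ (B \ A) = B := by rw [union_diff_cancel h]
  have := mu_add_pair hΩ hμ hA (alg_diff hΩ hB hA) disjoint_sdiff_right
  rw [hu] at this
  rw [this]; exact le_self_add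

lemma mu_fin (hΩ : IsSetAlgebraOn Ω) (hμ : IsCountablyAdditiveOn Ω μ)
    (hfin : μ Set.univ ≠ ⊤) {A : Set X} (hA : A ∈ Ω) : μ A ≠ ⊤ :=
  fun h => hfin (top_le_iff.1 (h ▸ mu_mono hΩ hμ hA (alg_univ hΩ) (subset_univ A)))

lemma mu_subadd (hΩ : IsSetAlgebraOn Ω) (hμ : IsCountablyAdditiveOn Ω μ)
    {A B : Set X} (hA : A ∈ Ω) (hB : B ∈ Ω) : μ (A ∪ B) ≤ μ A + μ B := by
  have hu : A ∪ (B \ A) = A ∪ B := by rw [union_diff_self]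
  have := mu_add_pair hΩ hμ hA (alg_diff hΩ hB hA) disjoint_sdiff_right
  rw [hu] at this
  rw [this]
  exact add_le_add_right (mu_mono hΩ hμ (alg_diff hΩ hB hA) hB diff_subset) _

lemma mu_incl_excl (hΩ : IsSetAlgebraOn Ω) (hμ : IsCountablyAdditiveOn Ω μ)
    {A B : Set X} (hA : A ∈ Ω) (hB : B ∈ Ω) :
    μ (A ∪ B) + μ (A ∩ B) = μ A + μ B := by
  have h1 : μ (A ∪ B) = μ A + μ (B \ A) := by
    rw [← union_diff_self]
    exact mu_add_pair hΩ hμ hA (alg_diff hΩ hB hA) disjoint_sdiff_right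
  have h2 : μ B = μ (A ∩ B) + μ (B \ A) := by
    have hu : (A ∩ B) ∪ (B \ A) = B := by
      ext x; simp [mem_diff]; tauto
    have h3 := mu_add_pair hΩ hμ (alg_inter hΩ hA hB) (alg_diff hΩ hB hA)
      (Disjoint.mono_left inter_subset_left disjoint_sdiff_right)
    rw [hu] at h3
    exact h3
  rw [h1, h2]; ring

lemma muStar_le_mu (hΩ : IsSetAlgebraOn Ω) (hμ : IsCountablyAdditiveOn Ω μ)
    {A E : Set X} (hE : E ∈ Ω) (h : A ⊆ E) : muStar Ω μ A ≤ μ E := by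
  set C : ℕ → Set X := fun n => if n = 0 then E else ∅ with hC
  have hmem : ∀ i, C i ∈ Ω := by intro i; rcases i with _ | i <;> simp [C, hE, hΩ.1]
  have hsub : A ⊆ ⋃ i, C i := fun x hx => mem_iUnion.2 ⟨0, by simp [C]; exact h hx⟩
  calc muStar Ω μ A ≤ ∑' i, μ (C i) :=
        iInf_le_of_le C (iInf_le_of_le hmem (iInf_le _ hsub))
    _ = μ E := by
        rw [tsum_eq_sum (s := ({0} : Finset ℕ)) ?_]
        · simp [C]
        · intro n hn; rcases n with _ | n <;> simp_all [C, hμ.1]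

lemma mu_le_muStar (hΩ : IsSetAlgebraOn Ω) (hμ : IsCountablyAdditiveOn Ω μ)
    {E : Set X} (hE : E ∈ Ω) : μ E ≤ muStar Ω μ E := by
  refine le_iInf fun C => le_iInf fun hC => le_iInf fun hsub => ?_
  set D : ℕ → Set X := disjointed (fun i => E ∩ C i) with hD
  have hDmem : ∀ i, D i ∈ Ω := alg_disjointed hΩ (fun i => alg_inter hΩ hE (hC i))
  have hDU : ⋃ i, D i = E := by
    rw [hD, iUnion_disjointed, ← inter_iUnion, inter_eq_left.2 hsub]
  have hadd := hμ.2 D hDmem (disjoint_disjointed _) (by rw [hDU]; exact hE)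
  rw [hDU] at hadd
  rw [hadd]
  refine ENNReal.tsum_le_tsum fun i => ?_
  exact mu_mono hΩ hμ (hDmem i) (hC i)
    ((disjointed_subset _ i).trans inter_subset_right)

lemma muStar_eq_mu (hΩ : IsSetAlgebraOn Ω) (hμ : IsCountablyAdditiveOn Ω μ)
    {E : Set X} (hE : E ∈ Ω) : muStar Ω μ E = μ E :=
  le_antisymm (muStar_le_mu hΩ hμ hE subset_rfl) (mu_le_muStar hΩ hμ hE)

lemma muStar_mono {A B : Set X} (h : A ⊆ B) : muStar Ω μ A ≤ muStar Ω μ B := by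
  refine le_iInf fun C => le_iInf fun hC => le_iInf fun hsub => ?_
  exact iInf_le_of_le C (iInf_le_of_le hC (iInf_le _ (h.trans hsub)))

lemma muStar_subadd (hΩ : IsSetAlgebraOn Ω) {U V : Set X} :
    muStar Ω μ (U ∪ V) ≤ muStar Ω μ U + muStar Ω μ V := by
  simp only [muStar, ENNReal.iInf_add, ENNReal.add_iInf]
  refine le_iInf fun C => le_iInf fun hC => le_iInf fun hCU =>
    le_iInf fun D => le_iInf fun hD => le_iInf fun hDV => ?_
  set E : ℕ → Set X := fun n => if Even n then C (n / 2) else D (n / 2) with hEdef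
  have hEmem : ∀ i, E i ∈ Ω := by
    intro i; by_cases h : Even i <;> simp [E, h, hC _, hD _]
  have hEsub : U ∪ V ⊆ ⋃ i, E i := by
    rintro x (hx | hx)
    · obtain ⟨i, hi⟩ := mem_iUnion.1 (hDV hx)
      refine mem_iUnion.2 ⟨2 * i + 1, ?_⟩
      have : ¬ Even (2 * i + 1) := by simp [Nat.even_add_one]
      simp [E, this, Nat.mul_add_div two_pos, hi]
    · obtain ⟨i, hi⟩ := mem_iUnion.1 (hCU hx)
      exact mem_iUnion.2 ⟨2 * i, by simp [E, Nat.mul_div_cancel_left i two_pos, hi]⟩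
  calc muStar Ω μ (U ∪ V) ≤ ∑' i, μ (E i) :=
        iInf_le_of_le E (iInf_le_of_le hEmem (iInf_le _ hEsub))
    _ = (∑' i, μ (E (2 * i))) + ∑' i, μ (E (2 * i + 1)) :=
        (tsum_even_add_odd ENNReal.summable ENNReal.summable).symm
    _ = (∑' i, μ (C i)) + ∑' i, μ (D i) := by
        congr 1
        · refine tsum_congr fun i => by simp [E, Nat.mul_div_cancel_left i two_pos]
        · refine tsum_congr fun i => ?_
          have : ¬ Even (2 * i + 1) := by simp [Nat.even_add_one]
          simp [E, this, Nat.mul_add_div two_pos]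
    _ = (∑' i, μ (D i)) + ∑' i, μ (C i) := add_comm _ _

lemma muStar_triangle (hΩ : IsSetAlgebraOn Ω) {U V : Set X} :
    muStar Ω μ U ≤ muStar Ω μ V + muStar Ω μ (U ∆ V) := by
  have hsub : U ⊆ V ∪ (U ∆ V) := by
    intro x hx
    by_cases hv : x ∈ V
    · exact Or.inl hv
    · exact Or.inr (by simp [Set.mem_symmDiff, hx, hv])
  exact (muStar_mono hsub).trans (muStar_subadd hΩ)

lemma muStar_le_univ (hΩ : IsSetAlgebraOn Ω) (hμ : IsCountablyAdditiveOn Ω μ)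
    {A : Set X} : muStar Ω μ A ≤ μ Set.univ :=
  muStar_le_mu hΩ hμ (alg_univ hΩ) (subset_univ A)

lemma symmDiff_inter_subset {A B S T : Set X} :
    (A ∩ B) ∆ (S ∩ T) ⊆ (A ∆ S) ∪ (B ∆ T) := by
  intro x hx
  simp only [Set.mem_symmDiff, Set.mem_inter_iff, Set.mem_union] at *
  tauto

/-- Key lemma: if `Aₙ, Bₙ ∈ Ω` converge to `S, T` in the `μ*`-pseudometric, then
`μ(Aₙ ∩ Bₙ) → μ*(S ∩ T)`. -/
lemma key (hΩ : IsSetAlgebraOn Ω) (hμ : IsCountablyAdditiveOn Ω μ)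
    (hfin : μ Set.univ ≠ ⊤) (A B : ℕ → Set X) (hA : ∀ n, A n ∈ Ω) (hB : ∀ n, B n ∈ Ω)
    (S T : Set X)
    (hS : Tendsto (fun n => muStar Ω μ (A n ∆ S)) atTop (𝓝 0))
    (hT : Tendsto (fun n => muStar Ω μ (B n ∆ T)) atTop (𝓝 0)) :
    Tendsto (fun n => μ (A n ∩ B n)) atTop (𝓝 (muStar Ω μ (S ∩ T))) := by
  set L := muStar Ω μ (S ∩ T) with hL
  set d : ℕ → ℝ≥0∞ := fun n => muStar Ω μ (A n ∆ S) + muStar Ω μ (B n ∆ T) with hd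
  have hdlim : Tendsto d atTop (𝓝 0) := by simpa using hS.add hT
  have hEmem : ∀ n, A n ∩ B n ∈ Ω := fun n => alg_inter hΩ (hA n) (hB n)
  have hdist : ∀ n, muStar Ω μ ((A n ∩ B n) ∆ (S ∩ T)) ≤ d n := fun n =>
    (muStar_mono symmDiff_inter_subset).trans (muStar_subadd hΩ)
  have hub : ∀ n, μ (A n ∩ B n) ≤ L + d n := by
    intro n
    calc μ (A n ∩ B n) ≤ muStar Ω μ (A n ∩ B n) := mu_le_muStar hΩ hμ (hEmem n)
      _ ≤ muStar Ω μ (S ∩ T) + muStar Ω μ ((A n ∩ B n) ∆ (S ∩ T)) := muStar_triangle hΩ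
      _ ≤ L + d n := add_le_add_right (hdist n) _
  have hlb : ∀ n, L ≤ μ (A n ∩ B n) + d n := by
    intro n
    calc L ≤ muStar Ω μ (A n ∩ B n) + muStar Ω μ ((S ∩ T) ∆ (A n ∩ B n)) :=
          muStar_triangle hΩ
      _ ≤ μ (A n ∩ B n) + d n := by
          refine add_le_add (muStar_le_mu hΩ hμ (hEmem n) subset_rfl) ?_
          rw [symmDiff_comm]; exact hdist n
  have hLfin : L ≠ ⊤ := by
    intro h
    have : L ≤ μ Set.univ := muStar_le_univ hΩ hμ
    exact hfin (top_le_iff.1 (h ▸ this))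
  rw [ENNReal.tendsto_atTop hLfin]
  intro ε hε
  have hev : ∀ᶠ n in atTop, d n < ε := hdlim.eventually (Iio_mem_nhds hε)
  obtain ⟨N, hN⟩ := eventually_atTop.1 hev
  refine ⟨N, fun n hn => ?_⟩
  constructor
  · exact tsub_le_iff_right.2 ((hlb n).trans (add_le_add_right (hN n hn).le _))
  · exact (hub n).trans (add_le_add_right (hN n hn).le _)

end Aux


/-- intersection measure formula and disjoint additivity. -/
theorem stmt12 {X : Type*} (Ω : Set (Set X)) (μ : Set X → ℝ≥0∞)
    (hΩ : IsSetAlgebraOn Ω) (hμ : IsCountablyAdditiveOn Ω μ) (hfin : μ Set.univ ≠ ⊤)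
    (A B : ℕ → Set X) (hA : MuCauchy Ω μ A) (hB : MuCauchy Ω μ B)
    (S T : Set X)
    (hS : Tendsto (fun n => muStar Ω μ (A n ∆ S)) atTop (𝓝 0))
    (hT : Tendsto (fun n => muStar Ω μ (B n ∆ T)) atTop (𝓝 0)) :
    Tendsto (fun n => μ (A n ∩ B n)) atTop (𝓝 (muStar Ω μ (S ∩ T))) ∧
    (muStar Ω μ (S ∩ T) = 0 →
      ∃ a b : ℝ≥0∞, Tendsto (fun n => μ (A n)) atTop (𝓝 a) ∧
        Tendsto (fun n => μ (B n)) atTop (𝓝 b) ∧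
        Tendsto (fun n => μ (A n ∪ B n)) atTop (𝓝 (a + b))) := by

  obtain ⟨hAmem, -⟩ := hA
  obtain ⟨hBmem, -⟩ := hB
  have h0 : muStar Ω μ (∅ : Set X) = 0 :=
    le_antisymm (by simpa [hμ.1] using muStar_le_mu hΩ hμ hΩ.1 subset_rfl) (zero_le)
  have huniv : Tendsto (fun n : ℕ => muStar Ω μ
      ((fun _ => (Set.univ : Set X)) n ∆ Set.univ)) atTop (𝓝 0) := by
    simpa [symmDiff_self, Set.bot_eq_empty, h0] using
      (tendsto_const_nhds : Tendsto (fun _ : ℕ => (0 : ℝ≥0∞)) atTop (𝓝 0))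
  have hmain := key hΩ hμ hfin A B hAmem hBmem S T hS hT
  refine ⟨hmain, fun hzero => ?_⟩
  have ha := key hΩ hμ hfin A (fun _ => Set.univ) hAmem (fun _ => alg_univ hΩ)
    S Set.univ hS huniv
  have hb := key hΩ hμ hfin B (fun _ => Set.univ) hBmem (fun _ => alg_univ hΩ)
    T Set.univ hT huniv
  simp only [Set.inter_univ] at ha hb
  refine ⟨muStar Ω μ S, muStar Ω μ T, ha, hb, ?_⟩
  rw [hzero] at hmain
  have heq : ∀ n, μ (A n ∪ B n) = (μ (A n) + μ (B n)) - μ (A n ∩ B n) := fun n =>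
    ENNReal.eq_sub_of_add_eq (mu_fin hΩ hμ hfin (alg_inter hΩ (hAmem n) (hBmem n)))
      (mu_incl_excl hΩ hμ (hAmem n) (hBmem n))
  have hsub := ENNReal.Tendsto.sub (ha.add hb) hmain (Or.inr ENNReal.zero_ne_top)
  simp only [tsub_zero] at hsub
  exact hsub.congr fun n => (heq n).symm
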